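/- For the congruence on {a,b}* generated by R_M = {(ab^n a, aba) : n ≥ 2}, no finite subset of R_M generates the same congruence: for every n₀ ≥ 2, the words ab^{n₀+1}a and aba are not related by the congruence generated by {(ab^n a, aba) : 2 ≤ n ≤ n₀}. -/

import Mathlib

open Relation

/-- Alphabet for the monoid `M`. -/
inductive AB : Type | a | b

/-- Alphabet for the monoid `N`. -/
inductive CD : Type | c | d

abbrev WM := FreeMonoid AB
abbrev WN := FreeMonoid CD

def a : WM := FreeMonoid.of AB.a
def b : WM := FreeMonoid.of AB.b
def c : WN := FreeMonoid.of CD.c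
def d : WN := FreeMonoid.of CD.d

/-- The defining relation set of `M`: `a b^n a = a b a` for `n ≥ 2`. -/
def rM : WM → WM → Prop := fun x y => ∃ n, 2 ≤ n ∧ x = a * b ^ n * a ∧ y = a * b * a

/-- The defining relation set of `N`. -/
def rN : WN → WN → Prop := fun x y =>
  (x = c * d ^ 2 * c ∨ x = c * d ^ 4 ∨ x = c * d ^ 3 * c ^ 2 ∨ x = c * d ^ 3 * (c * d * c)) ∧
    y = c * d * c

/-- Single-step rewriting relation of a rewriting system `R`. -/
def Step {α : Type} (R : FreeMonoid α → FreeMonoid α → Prop) (x y : FreeMonoid α) : Prop :=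
  ∃ u v p q, R u v ∧ x = p * u * q ∧ y = p * v * q

/-- A word is irreducible if no single-step rewrite applies to it. -/
def Irred {α : Type} (R : FreeMonoid α → FreeMonoid α → Prop) (w : FreeMonoid α) : Prop :=
  ∀ v, ¬ Step R w v

/-- Words `a^{i₀} b a^{i₁} b ⋯ b a^{i_k}` with `k ≥ 0`, all `i_j ≥ 1`. -/
def UM : Set WM :=
  {w | ∃ l : List ℕ, l ≠ [] ∧ (∀ i ∈ l, 1 ≤ i) ∧ w = ((l.map (a ^ ·)).intersperse b).prod}

/-- Words `c^{i₀} d c^{i₁} d ⋯ d c^{i_k}` with `k ≥ 0`, all `i_j ≥ 1`. -/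
def UN : Set WN :=
  {w | ∃ l : List ℕ, l ≠ [] ∧ (∀ i ∈ l, 1 ≤ i) ∧ w = ((l.map (c ^ ·)).intersperse d).prod}

/-- Normal forms for `M`. -/
def NM : Set WM :=
  {w | (∃ s : ℕ, w = b ^ s) ∨ (∃ s : ℕ, ∃ u ∈ UM, w = b ^ s * u) ∨
    (∃ s t : ℕ, ∃ u ∈ UM, 0 < t ∧ w = b ^ s * u * b ^ t)}

/-- Normal forms for `N`. -/
def NN : Set WN :=
  {w | (∃ p : ℕ, w = d ^ p) ∨ (∃ p : ℕ, ∃ v ∈ UN, w = d ^ p * v) ∨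
    (∃ p q r : ℕ, ∃ v ∈ UN, r ≤ 3 ∧ 0 < q + r ∧ w = d ^ p * v * (d ^ 3 * c) ^ q * d ^ r)}

/-- The substitution `a ↦ c`, `b ↦ d`. -/
def bar : WM →* WN := FreeMonoid.map fun x => match x with | AB.a => CD.c | AB.b => CD.d

/-- Transition functions -/
def delta (n₀ : ℕ) : AB → Function.End (Option ℕ × Bool)
  | AB.a => fun s => (some 0, s.2 || (s.1.elim false (fun k => decide (n₀ + 1 ≤ k))))
  | AB.b => fun s => (s.1.map (· + 1), s.2)

def phi (n₀ : ℕ) : WM →* Function.End (Option ℕ × Bool) := FreeMonoid.lift (delta n₀)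

lemma phi_a (n₀ : ℕ) : phi n₀ a = delta n₀ AB.a := FreeMonoid.lift_eval_of _ _
lemma phi_b (n₀ : ℕ) : phi n₀ b = delta n₀ AB.b := FreeMonoid.lift_eval_of _ _

lemma phi_bpow (n₀ n : ℕ) (s : Option ℕ × Bool) :
    (phi n₀ (b ^ n)) s = (s.1.map (· + n), s.2) := by
  induction n generalizing s with
  | zero => show s = _; simp [Option.map_id']
  | succ k ih =>
      have : phi n₀ (b ^ (k+1)) = phi n₀ (b^k) * phi n₀ b := by
        rw [← map_mul, pow_succ]
      rw [this]
      show (phi n₀ (b^k)) ((phi n₀ b) s) = _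
      rw [phi_b, ih]
      obtain ⟨o, f⟩ := s
      cases o <;> simp [delta] <;> omega

lemma phi_aba (n₀ n : ℕ) (s : Option ℕ × Bool) :
    (phi n₀ (a * b ^ n * a)) s = (some 0, s.2 || (s.1.elim false (fun k => decide (n₀ + 1 ≤ k))) || decide (n₀ + 1 ≤ n)) := by
  have : phi n₀ (a * b ^ n * a) = phi n₀ a * phi n₀ (b^n) * phi n₀ a := by
    simp [map_mul]
  rw [this]
  show (phi n₀ a) ((phi n₀ (b^n)) ((phi n₀ a) s)) = _
  rw [phi_a, phi_bpow]
  simp [delta]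


/-- For every `n₀ ≥ 2`, the words `a b^{n₀+1} a` and `a b a` are not related by the
congruence generated by the rules with `2 ≤ n ≤ n₀`. -/
theorem stmt1 (n₀ : ℕ) (hn₀ : 2 ≤ n₀) :
    ¬ conGen (fun x y => ∃ n, 2 ≤ n ∧ n ≤ n₀ ∧ x = a * b ^ n * a ∧ y = a * b * a)
        (a * b ^ (n₀ + 1) * a) (a * b * a) := by
  intro h
  have hgen : ∀ x y, (fun x y => ∃ n, 2 ≤ n ∧ n ≤ n₀ ∧ x = a * b ^ n * a ∧ y = a * b * a) x y →
      Con.ker (phi n₀) x y := by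
    rintro x y ⟨n, h2, hle, rfl, rfl⟩
    show phi n₀ _ = phi n₀ _
    funext s
    rw [show (a * b * a : WM) = a * b ^ 1 * a by rw [pow_one], phi_aba, phi_aba]
    have h1 : decide (n₀ + 1 ≤ n) = false := by simp; omega
    have h2 : decide (n₀ + 1 ≤ 1) = false := by simp; omega
    rw [h1, h2]
  have h' : phi n₀ (a * b ^ (n₀ + 1) * a) = phi n₀ (a * b * a) := (Con.conGen_le (c := Con.ker (phi n₀))).2 hgen h
  have := congrFun h' (none, false)
  rw [show (a * b * a : WM) = a * b ^ 1 * a by rw [pow_one], phi_aba, phi_aba] at this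
  simp at this
  omega
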